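/- arXiv:2106.15370 — 5 statements merged into one kernel-verified Lean document; each statement's English description precedes it below -/
import Mathlib

section
/- Every density ρ in the set P_{M,N} = { ρ : {1,…,M} → ℝ | 0 ≤ ρ_i ≤ 1, Σ_i ρ_i = N } is pure-state N-representable: there exists a normalized state Ψ ∈ Λ^N ℂ^M whose density equals ρ. Moreover P_{M,N} is exactly the set of densities of normalized states, i.e., it is maximal. -/
open scoped BigOperators

/-- The density at vertex `i` of a state `Ψ` in the `N`-fermion space `Λ^N ℂ^M`. -/
def density (M N : ℕ) (Ψ : {I : Finset (Fin M) // I.card = N} → ℂ) (i : Fin M) : ℝ :=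
  ∑ I : {I : Finset (Fin M) // I.card = N}, if i ∈ I.1 then Complex.normSq (Ψ I) else 0

open Finset in
/-- Key combinatorial lemma: every point of the hypersimplex is a convex combination of
0/1 vertices, by induction on the number of fractional coordinates. -/
lemma hypersimplex_rep (M N : ℕ) :
    ∀ n : ℕ, ∀ ρ : Fin M → ℝ, (∀ i, 0 ≤ ρ i ∧ ρ i ≤ 1) → (∑ i, ρ i = N) →
      (Finset.univ.filter (fun i => ρ i ≠ 0 ∧ ρ i ≠ 1)).card ≤ n →
      ∃ p : {I : Finset (Fin M) // I.card = N} → ℝ,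
        (∀ I, 0 ≤ p I) ∧ (∑ I, p I = 1) ∧
        (∀ i, (∑ I : {I : Finset (Fin M) // I.card = N}, if i ∈ I.1 then p I else 0) = ρ i) := by
  intro n
  induction n with
  | zero =>
    intro ρ hb hs hc
    have hF : ∀ i : Fin M, ρ i = 0 ∨ ρ i = 1 := by
      intro i
      by_contra h
      push_neg at h
      have : i ∈ Finset.univ.filter (fun i => ρ i ≠ 0 ∧ ρ i ≠ 1) := by
        simp [h.1, h.2]
      have := Finset.card_pos.mpr ⟨i, this⟩
      omega
    set S : Finset (Fin M) := Finset.univ.filter (fun i => ρ i = 1) with hSdef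
    have hρS : ∀ i, ρ i = if i ∈ S then 1 else 0 := by
      intro i
      by_cases h : i ∈ S
      · simp [h, (Finset.mem_filter.mp h).2]
      · have : ρ i ≠ 1 := fun h1 => h (by simp [hSdef, h1])
        rcases hF i with h0 | h1
        · simp [h, h0]
        · exact absurd h1 this
    have hcard : S.card = N := by
      have : (∑ i, ρ i) = (S.card : ℝ) := by
        rw [Finset.sum_congr rfl (fun i _ => hρS i)]
        simp
      rw [hs] at this
      exact_mod_cast this.symm
    refine ⟨fun I => if I = ⟨S, hcard⟩ then 1 else 0, ?_, ?_, ?_⟩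
    · intro I; dsimp only; split <;> norm_num
    · simp
    · intro i
      rw [hρS i]
      have : ∀ I : {I : Finset (Fin M) // I.card = N},
          (if i ∈ I.1 then (if I = ⟨S, hcard⟩ then (1:ℝ) else 0) else 0)
            = if I = ⟨S, hcard⟩ then (if i ∈ S then (1:ℝ) else 0) else 0 := by
        intro I
        by_cases h : I = ⟨S, hcard⟩
        · subst h; simp
        · simp [h]
      rw [Finset.sum_congr rfl (fun I _ => this I)]
      simp
  | succ n ih =>
    intro ρ hb hs hc
    by_cases hle : (Finset.univ.filter (fun i => ρ i ≠ 0 ∧ ρ i ≠ 1)).card ≤ n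
    · exact ih ρ hb hs hle
    set F := Finset.univ.filter (fun i => ρ i ≠ 0 ∧ ρ i ≠ 1) with hFdef
    have hFne : F.Nonempty := Finset.card_pos.mp (by omega)
    obtain ⟨i, hi⟩ := hFne
    have hi' := (Finset.mem_filter.mp hi).2
    have hia : 0 < ρ i := lt_of_le_of_ne (hb i).1 (Ne.symm hi'.1)
    have hia' : ρ i < 1 := lt_of_le_of_ne (hb i).2 hi'.2
    -- find a second fractional coordinate
    have hj : ∃ j ∈ F, j ≠ i := by
      by_contra h
      push_neg at h
      have hint : ∀ k, k ≠ i → ρ k = 0 ∨ ρ k = 1 := by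
        intro k hk
        by_contra hk'
        push_neg at hk'
        exact hk (h k (by simp [hFdef, hk'.1, hk'.2]))
      set m := ((Finset.univ.erase i).filter (fun k => ρ k = 1)).card with hm
      have hsum : ∑ k ∈ Finset.univ.erase i, ρ k = (m : ℝ) := by
        rw [← Finset.sum_filter_add_sum_filter_not (Finset.univ.erase i) (fun k => ρ k = 1)]
        have h1 : ∑ k ∈ (Finset.univ.erase i).filter (fun k => ρ k = 1), ρ k = (m : ℝ) := by
          rw [Finset.sum_congr rfl (fun k hk => (Finset.mem_filter.mp hk).2)]
          simp
          exact hm.symm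
        have h2 : ∑ k ∈ (Finset.univ.erase i).filter (fun k => ¬ ρ k = 1), ρ k = 0 := by
          apply Finset.sum_eq_zero
          intro k hk
          rcases hint k (Finset.ne_of_mem_erase (Finset.mem_of_mem_filter k hk)) with h0 | h1
          · exact h0
          · exact absurd h1 (Finset.mem_filter.mp hk).2
        rw [h1, h2, add_zero]
      have htot : ρ i + (m : ℝ) = (N : ℝ) := by
        rw [← hsum, Finset.add_sum_erase _ _ (Finset.mem_univ i), hs]
      rcases le_or_gt N m with hNm | hNm
      · have : (N : ℝ) ≤ (m : ℝ) := by exact_mod_cast hNm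
        linarith
      · have : (m : ℝ) + 1 ≤ (N : ℝ) := by exact_mod_cast hNm
        linarith
    obtain ⟨j, hj, hji⟩ := hj
    have hj' := (Finset.mem_filter.mp hj).2
    have hjb : 0 < ρ j := lt_of_le_of_ne (hb j).1 (Ne.symm hj'.1)
    have hjb' : ρ j < 1 := lt_of_le_of_ne (hb j).2 hj'.2
    set d : Fin M → ℝ := fun k => if k = i then 1 else if k = j then -1 else 0 with hd
    have hdsum : ∑ k, d k = 0 := by
      rw [← Finset.add_sum_erase _ d (Finset.mem_univ i)]
      have h1 : ∀ k ∈ Finset.univ.erase i, d k = if k = j then (-1:ℝ) else 0 := by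
        intro k hk
        simp only [hd]
        rw [if_neg (Finset.ne_of_mem_erase hk)]
      rw [Finset.sum_congr rfl h1, Finset.sum_ite_eq' (Finset.univ.erase i) j]
      simp [hd, Finset.mem_erase.mpr ⟨hji, Finset.mem_univ j⟩]
    set ε₁ : ℝ := min (1 - ρ i) (ρ j) with hε₁
    set ε₂ : ℝ := min (ρ i) (1 - ρ j) with hε₂
    have hε₁pos : 0 < ε₁ := lt_min (by linarith) hjb
    have hε₂pos : 0 < ε₂ := lt_min hia (by linarith)
    set ρp : Fin M → ℝ := fun k => ρ k + ε₁ * d k with hρp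
    set ρm : Fin M → ℝ := fun k => ρ k - ε₂ * d k with hρm
    have hdk : ∀ k, k ≠ i → k ≠ j → d k = 0 := by
      intro k h1 h2; simp [hd, h1, h2]
    have hdi : d i = 1 := by simp [hd]
    have hdj : d j = -1 := by simp [hd, hji]
    -- bounds
    have hbp : ∀ k, 0 ≤ ρp k ∧ ρp k ≤ 1 := by
      intro k
      by_cases h1 : k = i
      · subst h1
        simp only [hρp, hdi]
        have h := min_le_left (1 - ρ k) (ρ j)
        constructor <;> [nlinarith; nlinarith]
      · by_cases h2 : k = j
        · subst h2
          simp only [hρp, hdj]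
          have h := min_le_right (1 - ρ i) (ρ k)
          constructor <;> [nlinarith; nlinarith [(hb k).2]]
        · simp only [hρp, hdk k h1 h2, mul_zero, add_zero]
          exact hb k
    have hbm : ∀ k, 0 ≤ ρm k ∧ ρm k ≤ 1 := by
      intro k
      by_cases h1 : k = i
      · subst h1
        simp only [hρm, hdi]
        have h := min_le_left (ρ k) (1 - ρ j)
        constructor <;> nlinarith [(hb k).2]
      · by_cases h2 : k = j
        · subst h2
          simp only [hρm, hdj]
          have h := min_le_right (ρ i) (1 - ρ k)
          constructor <;> nlinarith [(hb k).1]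
        · simp only [hρm, hdk k h1 h2, mul_zero, sub_zero]
          exact hb k
    -- sums
    have hsp : ∑ k, ρp k = (N : ℝ) := by
      simp only [hρp]
      rw [Finset.sum_add_distrib, ← Finset.mul_sum, hdsum, hs, mul_zero, add_zero]
    have hsm : ∑ k, ρm k = (N : ℝ) := by
      simp only [hρm]
      rw [Finset.sum_sub_distrib, ← Finset.mul_sum, hdsum, hs, mul_zero, sub_zero]
    -- fractional sets shrink
    have hsub : ∀ (σ : Fin M → ℝ), (∀ k, k ≠ i → k ≠ j → σ k = ρ k) →
        Finset.univ.filter (fun k => σ k ≠ 0 ∧ σ k ≠ 1) ⊆ F := by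
      intro σ hσ k hk
      by_cases h1 : k = i
      · subst h1; exact hi
      · by_cases h2 : k = j
        · subst h2; exact hj
        · have := (Finset.mem_filter.mp hk).2
          rw [hσ k h1 h2] at this
          simp [hFdef, this.1, this.2]
    have hcp : (Finset.univ.filter (fun k => ρp k ≠ 0 ∧ ρp k ≠ 1)).card ≤ n := by
      have hsub' := hsub ρp (fun k h1 h2 => by simp [hρp, hdk k h1 h2])
      have : ∃ x ∈ F, x ∉ Finset.univ.filter (fun k => ρp k ≠ 0 ∧ ρp k ≠ 1) := by
        rcases le_total (1 - ρ i) (ρ j) with h | h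
        · refine ⟨i, hi, ?_⟩
          have : ρp i = 1 := by
            simp only [hρp, hdi, mul_one, hε₁, min_eq_left h]; ring
          simp [this]
        · refine ⟨j, hj, ?_⟩
          have : ρp j = 0 := by
            simp only [hρp, hdj, hε₁, min_eq_right h]; ring
          simp [this]
      obtain ⟨x, hx, hx'⟩ := this
      have hsub2 : Finset.univ.filter (fun k => ρp k ≠ 0 ∧ ρp k ≠ 1) ⊆ F.erase x :=
        Finset.subset_erase.mpr ⟨hsub', hx'⟩
      have := Finset.card_le_card hsub2
      have := Finset.card_erase_of_mem hx
      omega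
    have hcm : (Finset.univ.filter (fun k => ρm k ≠ 0 ∧ ρm k ≠ 1)).card ≤ n := by
      have hsub' := hsub ρm (fun k h1 h2 => by simp [hρm, hdk k h1 h2])
      have : ∃ x ∈ F, x ∉ Finset.univ.filter (fun k => ρm k ≠ 0 ∧ ρm k ≠ 1) := by
        rcases le_total (ρ i) (1 - ρ j) with h | h
        · refine ⟨i, hi, ?_⟩
          have : ρm i = 0 := by
            simp only [hρm, hdi, mul_one, hε₂, min_eq_left h]; ring
          simp [this]
        · refine ⟨j, hj, ?_⟩
          have : ρm j = 1 := by
            simp only [hρm, hdj, hε₂, min_eq_right h]; ring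
          simp [this]
      obtain ⟨x, hx, hx'⟩ := this
      have hsub2 : Finset.univ.filter (fun k => ρm k ≠ 0 ∧ ρm k ≠ 1) ⊆ F.erase x :=
        Finset.subset_erase.mpr ⟨hsub', hx'⟩
      have := Finset.card_le_card hsub2
      have := Finset.card_erase_of_mem hx
      omega
    obtain ⟨pp, hpp0, hpp1, hppd⟩ := ih ρp hbp hsp hcp
    obtain ⟨pm, hpm0, hpm1, hpmd⟩ := ih ρm hbm hsm hcm
    set lam : ℝ := ε₂ / (ε₁ + ε₂) with hlam
    have hεsum : 0 < ε₁ + ε₂ := by linarith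
    have hlam0 : 0 ≤ lam := div_nonneg (le_of_lt hε₂pos) (le_of_lt hεsum)
    have hlam1 : lam ≤ 1 := by
      rw [hlam, div_le_one hεsum]; linarith
    refine ⟨fun I => lam * pp I + (1 - lam) * pm I, ?_, ?_, ?_⟩
    · intro I
      exact add_nonneg (mul_nonneg hlam0 (hpp0 I)) (mul_nonneg (by linarith) (hpm0 I))
    · rw [Finset.sum_add_distrib, ← Finset.mul_sum, ← Finset.mul_sum, hpp1, hpm1]
      ring
    · intro k
      have hsplit : ∀ I : {I : Finset (Fin M) // I.card = N},
          (if k ∈ I.1 then lam * pp I + (1 - lam) * pm I else 0)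
            = lam * (if k ∈ I.1 then pp I else 0) + (1 - lam) * (if k ∈ I.1 then pm I else 0) := by
        intro I; split <;> simp
      rw [Finset.sum_congr rfl (fun I _ => hsplit I), Finset.sum_add_distrib,
        ← Finset.mul_sum, ← Finset.mul_sum, hppd k, hpmd k]
      simp only [hρp, hρm]
      have hl : lam * (ε₁ + ε₂) = ε₂ := by
        rw [hlam, div_mul_cancel₀ _ (ne_of_gt hεsum)]
      have hl2 : lam * ε₁ - (1 - lam) * ε₂ = 0 := by linear_combination hl
      linear_combination d k * hl2

/-- A density `ρ` belongs to `P_{M,N} = {ρ | 0 ≤ ρ_i ≤ 1, Σ ρ_i = N}` if and only if it is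
pure-state `N`-representable, i.e. it is the density of some normalized state in `Λ^N ℂ^M`.
This shows every `ρ ∈ P_{M,N}` is `N`-representable and that `P_{M,N}` is maximal. -/
theorem N_representability (M N : ℕ) (hNM : N ≤ M) (ρ : Fin M → ℝ) :
    ((∀ i, 0 ≤ ρ i ∧ ρ i ≤ 1) ∧ ∑ i, ρ i = N) ↔
      ∃ Ψ : {I : Finset (Fin M) // I.card = N} → ℂ,
        (∑ I : {I : Finset (Fin M) // I.card = N}, Complex.normSq (Ψ I) = 1) ∧
        ∀ i, density M N Ψ i = ρ i := by
  constructor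
  · rintro ⟨hb, hs⟩
    obtain ⟨p, hp0, hp1, hpd⟩ := hypersimplex_rep M N
      (Finset.univ.filter (fun i => ρ i ≠ 0 ∧ ρ i ≠ 1)).card ρ hb hs le_rfl
    refine ⟨fun I => (Real.sqrt (p I) : ℂ), ?_, ?_⟩
    · have : ∀ I : {I : Finset (Fin M) // I.card = N},
          Complex.normSq ((Real.sqrt (p I) : ℂ)) = p I := by
        intro I
        rw [Complex.normSq_ofReal, Real.mul_self_sqrt (hp0 I)]
      rw [Finset.sum_congr rfl (fun I _ => this I), hp1]
    · intro i
      unfold density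
      rw [← hpd i]
      apply Finset.sum_congr rfl
      intro I _
      split
      · rw [Complex.normSq_ofReal, Real.mul_self_sqrt (hp0 I)]
      · rfl
  · rintro ⟨Ψ, hΨ, hd⟩
    constructor
    · intro i
      rw [← hd i]
      unfold density
      constructor
      · apply Finset.sum_nonneg
        intro I _
        split
        · exact Complex.normSq_nonneg _
        · exact le_refl 0
      · rw [← hΨ]
        apply Finset.sum_le_sum
        intro I _
        split
        · exact le_refl _
        · exact Complex.normSq_nonneg _
    · have : ∑ i, ρ i = ∑ i, density M N Ψ i := by
        exact Finset.sum_congr rfl (fun i _ => (hd i).symm)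
      rw [this]
      unfold density
      rw [Finset.sum_comm]
      have : ∀ I : {I : Finset (Fin M) // I.card = N},
          (∑ i : Fin M, if i ∈ I.1 then Complex.normSq (Ψ I) else 0)
            = (N : ℝ) * Complex.normSq (Ψ I) := by
        intro I
        rw [Finset.sum_ite_mem, Finset.univ_inter, Finset.sum_const, I.2, nsmul_eq_mul]
      rw [Finset.sum_congr rfl (fun I _ => this I), ← Finset.mul_sum, hΨ, mul_one]
end

section
/- For the two-particle triangle-graph Hamiltonian H(v) = 4I + [[v₁+v₂, -1, 1], [-1, v₁+v₃, -1], [1, -1, v₂+v₃]] with v = (0, -t, 0) and t > 0, the vector Ψ_A = (1/√2)(1, 0, -1) is a non-degenerate ground state with eigenvalue 3 - t, for every t > 0. Hence the potentials (0,-t,0) for all t > 0 share the ground state Ψ_A (and thus the ground-state density (1/2, 1, 1/2)), violating the Hohenberg–Kohn uniqueness. -/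
open scoped BigOperators

/-- For the two-particle triangle-graph Hamiltonian with potential `v = (0,-t,0)`, `t > 0`,
the vector `Ψ_A = (1/√2)(1,0,-1)` is a non-degenerate ground state with eigenvalue `3 - t`;
hence all these potentials share the ground state `Ψ_A` and the ground-state density
`(1/2, 1, 1/2)`, violating Hohenberg–Kohn uniqueness. -/
theorem triangle_HK_violation (t : ℝ) (ht : 0 < t)
    (H : Matrix (Fin 3) (Fin 3) ℝ)
    (hH : H = Matrix.of ![![4 - t, -1, 1], ![-1, 4, -1], ![1, -1, 4 - t]])
    (Ψ : Fin 3 → ℝ)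
    (hΨ : Ψ = fun i => (1 / Real.sqrt 2) * ![1, 0, -1] i) :
    H.mulVec Ψ = (3 - t) • Ψ ∧
    (∀ (μ : ℝ) (x : Fin 3 → ℝ), x ≠ 0 → H.mulVec x = μ • x → μ ≠ 3 - t → 3 - t < μ) ∧
    (∀ x : Fin 3 → ℝ, H.mulVec x = (3 - t) • x → ∃ c : ℝ, x = c • Ψ) ∧
    (Ψ 0 ^ 2 + Ψ 1 ^ 2 = 1 / 2 ∧ Ψ 0 ^ 2 + Ψ 2 ^ 2 = 1 ∧ Ψ 1 ^ 2 + Ψ 2 ^ 2 = 1 / 2) := by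
  subst hH hΨ
  have hs2 : Real.sqrt 2 * Real.sqrt 2 = 2 := Real.mul_self_sqrt (by norm_num)
  have hs2' : Real.sqrt 2 ≠ 0 := by positivity
  refine ⟨?_, ?_, ?_, ?_⟩
  · funext i
    fin_cases i <;>
      simp [Matrix.mulVec, dotProduct, Fin.sum_univ_three] <;> ring
  · intro μ x hx hμx hμ
    have e0 := congrFun hμx 0
    have e1 := congrFun hμx 1
    have e2 := congrFun hμx 2
    simp [Matrix.mulVec, dotProduct, Fin.sum_univ_three] at e0 e1 e2
    have hac : x 0 = x 2 := by
      by_contra h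
      have key : (3 - t - μ) * (x 0 - x 2) = 0 := by linear_combination e0 - e2
      rcases mul_eq_zero.mp key with h1 | h2
      · exact hμ (by linarith)
      · exact h (by linarith)
    have ha0 : x 0 ≠ 0 := by
      intro h0
      apply hx
      have h2 : x 2 = 0 := by rw [← hac]; exact h0
      have hb : x 1 = 0 := by rw [h0, h2] at e0; linarith
      funext i
      fin_cases i <;> simp [h0, hb, h2]
    have hb : x 1 = (5 - t - μ) * x 0 := by linear_combination -e0 - hac
    have poly : μ ^ 2 - (9 - t) * μ + 18 - 4 * t = 0 := by
      have h1 : ((4 - μ) * (5 - t - μ) - 2) * x 0 = 0 := by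
        linear_combination -(4 - μ) * hb + e1 - hac
      rcases mul_eq_zero.mp h1 with h2 | h2
      · linear_combination h2
      · exact absurd h2 ha0
    by_contra hlt
    have hμlt : μ < 3 - t := lt_of_le_of_ne (by linarith) hμ
    have h6 : μ < 6 := by linarith
    nlinarith [mul_pos (by linarith : (0:ℝ) < 3 - t - μ) (by linarith : (0:ℝ) < 6 - μ)]
  · intro x hx
    have e0 := congrFun hx 0
    have e1 := congrFun hx 1
    have e2 := congrFun hx 2
    simp [Matrix.mulVec, dotProduct, Fin.sum_univ_three] at e0 e1 e2
    have hb : x 1 = 0 := by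
      have h1 : x 0 + x 2 = x 1 := by linarith
      have h2 : (1 + t) * x 1 = x 0 + x 2 := by linarith
      have := ht
      nlinarith [h1, h2]
    have hc : x 2 = - x 0 := by linarith
    refine ⟨x 0 * Real.sqrt 2, ?_⟩
    funext i
    fin_cases i <;>
      simp [hb, hc] <;> field_simp <;> nlinarith [hs2]
  · have h : (1 / Real.sqrt 2) ^ 2 = 1 / 2 := by
      rw [div_pow, one_pow, Real.sq_sqrt (by norm_num : (0:ℝ) ≤ 2)]
    refine ⟨?_, ?_, ?_⟩ <;> simp <;> nlinarith [h]
end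

section
/- For the square-graph two-particle Hamiltonian H(s,t) (the explicit 6×6 real symmetric matrix below), whenever |s| > |t| the vector Ψ_A(s) = (1+α(s)²)^{-1}(0, α(s), α(s)², 1, α(s), 0) with α(s) = -s + √(1+s²) is a non-degenerate ground state with eigenvalue 4 - 2√(1+s²), independent of t. Hence for fixed s ≠ 0 all potentials parametrized by t ∈ (-|s|, |s|) yield the same ground state, violating the Hohenberg–Kohn theorem with a non-degenerate ground state whose density has no zero or full occupation. -/
open scoped BigOperators

noncomputable def sqAlpha (s : ℝ) : ℝ := -s + Real.sqrt (1 + s ^ 2)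

/-- The square-graph two-particle Hamiltonian `H(s,t)` in the ordered basis
`e₁∧e₂, e₁∧e₃, e₁∧e₄, e₂∧e₃, e₂∧e₄, e₃∧e₄`. -/
noncomputable def Hsq (s t : ℝ) : Matrix (Fin 6) (Fin 6) ℝ :=
  (4 : ℝ) • (1 : Matrix (Fin 6) (Fin 6) ℝ) +
    Matrix.of ![![2*t, -1, 0, 0, 1, 0],
                ![-1, 0, -1, -1, 0, 1],
                ![0, -1, 2*s, 0, -1, 0],
                ![0, -1, 0, -2*s, -1, 0],
                ![1, 0, -1, -1, 0, -1],
                ![0, 1, 0, 0, -1, -2*t]]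

noncomputable def PsiA (s : ℝ) : Fin 6 → ℝ :=
  fun i => (1 / (1 + sqAlpha s ^ 2)) * ![0, sqAlpha s, sqAlpha s ^ 2, 1, sqAlpha s, 0] i

private lemma cv5' {α : Type*} (a : α) (u : Fin 5 → α) : Matrix.vecCons a u 5 = u 4 := rfl
private lemma cv4' {α : Type*} (a : α) (u : Fin 4 → α) : Matrix.vecCons a u 4 = u 3 := rfl
private lemma cv3' {α : Type*} (a : α) (u : Fin 3 → α) : Matrix.vecCons a u 3 = u 2 := rfl
private lemma cv2' {α : Type*} (a : α) (u : Fin 2 → α) : Matrix.vecCons a u 2 = u 1 := rfl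

/-- Dot products with the six eigenvectors of `Hsq`. -/
private lemma eig_products (s t μ r q : ℝ) (hr : r^2 = 1+s^2) (hq : q^2 = 1+t^2)
    (x : Fin 6 → ℝ) (h : (Hsq s t).mulVec x = μ • x) :
    (4-2*r-μ) * ((r-s)*x 1 + (r-s)^2*x 2 + x 3 + (r-s)*x 4) = 0 ∧
    (4+2*r-μ) * ((r-s)*x 1 - x 2 - (r-s)^2*x 3 + (r-s)*x 4) = 0 ∧
    (4-2*q-μ) * (-(q-t)^2*x 0 - (q-t)*x 1 + (q-t)*x 4 + x 5) = 0 ∧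
    (4+2*q-μ) * (-(x 0) + (q-t)*x 1 - (q-t)*x 4 + (q-t)^2*x 5) = 0 ∧
    (4-μ) * (s*x 1 + x 2 - x 3 + s*x 4) = 0 ∧
    (4-μ) * (x 0 + t*x 1 - t*x 4 + x 5) = 0 := by
  have e0 := congrFun h 0
  have e1 := congrFun h 1
  have e2 := congrFun h 2
  have e3 := congrFun h 3
  have e4 := congrFun h 4
  have e5 := congrFun h 5
  simp [Hsq, Matrix.mulVec, dotProduct, Fin.sum_univ_six, Matrix.add_apply,
    Matrix.smul_apply, Matrix.one_apply, cv5', cv4', cv3', cv2'] at e0 e1 e2 e3 e4 e5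
  refine ⟨?_, ?_, ?_, ?_, ?_, ?_⟩
  · linear_combination (r-s)*e1 + (r-s)^2*e2 + e3 + (r-s)*e4 +
      (-(x 4) - x 1 - 2*r*x 2 + 2*s*x 2)*hr
  · linear_combination (r-s)*e1 - e2 - (r-s)^2*e3 + (r-s)*e4 +
      (x 4 + x 1 - 2*r*x 3 + 2*s*x 3)*hr
  · linear_combination (-(q-t)^2)*e0 - (q-t)*e1 + (q-t)*e4 + e5 +
      (-(x 4) + x 1 + 2*q*x 0 - 2*t*x 0)*hq
  · linear_combination (-1 : ℝ)*e0 + (q-t)*e1 - (q-t)*e4 + (q-t)^2*e5 +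
      (-(x 4) + x 1 + 2*q*x 5 - 2*t*x 5)*hq
  · linear_combination s*e1 + e2 - e3 + s*e4
  · linear_combination e0 + t*e1 - t*e4 + e5

/-- The B-part elimination: from the three "t-sector" products vanishing. -/
private lemma Bpart (t B : ℝ) (hB : B^2 = 1 - 2*t*B) (hBpos : 0 < B)
    (x : Fin 6 → ℝ)
    (c3 : -B^2*x 0 - B*x 1 + B*x 4 + x 5 = 0)
    (c4 : -(x 0) + B*x 1 - B*x 4 + B^2*x 5 = 0)
    (c6 : x 0 + t*x 1 - t*x 4 + x 5 = 0) :
    x 0 = 0 ∧ x 5 = 0 ∧ x 1 = x 4 := by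
  have hB2 : (0:ℝ) < 1 + B^2 := by positivity
  have p1 : (1+B^2)*((B^2-1)*x 0 + B*(x 1 - x 4)) = 0 := by
    linear_combination c4 - B^2*c3
  have p2 : (B^2-1)*x 0 + B*(x 1 - x 4) = 0 :=
    (mul_eq_zero.mp p1).resolve_left hB2.ne'
  have p3 : B*((x 1 - x 4) - 2*t*x 0) = 0 := by linear_combination p2 - x 0*hB
  have p4 : x 1 - x 4 = 2*t*x 0 := by
    have := (mul_eq_zero.mp p3).resolve_left hBpos.ne'
    linarith
  have p5 : (2+2*t^2)*x 0 = 0 := by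
    linear_combination c6 - c3 - (t+B)*p4 - x 0*hB
  have hx0 : x 0 = 0 := by
    have h2t : (0:ℝ) < 2+2*t^2 := by positivity
    exact (mul_eq_zero.mp p5).resolve_left h2t.ne'
  have hd0 : x 1 = x 4 := by rw [hx0] at p4; linarith
  have hx5 : x 5 = 0 := by linear_combination c3 + B^2*hx0 + B*hd0
  exact ⟨hx0, hx5, hd0⟩

private lemma zero_of (s t A B : ℝ) (hA : A^2 = 1 - 2*s*A) (hB : B^2 = 1 - 2*t*B)
    (hApos : 0 < A) (hBpos : 0 < B) (x : Fin 6 → ℝ)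
    (c1 : A*x 1 + A^2*x 2 + x 3 + A*x 4 = 0)
    (c2 : A*x 1 - x 2 - A^2*x 3 + A*x 4 = 0)
    (c3 : -B^2*x 0 - B*x 1 + B*x 4 + x 5 = 0)
    (c4 : -(x 0) + B*x 1 - B*x 4 + B^2*x 5 = 0)
    (c5 : s*x 1 + x 2 - x 3 + s*x 4 = 0)
    (c6 : x 0 + t*x 1 - t*x 4 + x 5 = 0) : x = 0 := by
  obtain ⟨hx0, hx5, hd0⟩ := Bpart t B hB hBpos x c3 c4 c6
  have hA2 : (0:ℝ) < 1 + A^2 := by positivity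
  have q1 : (1+A^2)*(x 2 + x 3) = 0 := by linear_combination c1 - c2
  have q2 : x 2 + x 3 = 0 := (mul_eq_zero.mp q1).resolve_left hA2.ne'
  have q3 : A*((x 1 + x 4) - s*(x 2 - x 3)) = 0 := by
    linear_combination c1/2 + c2/2 - ((x 2 - x 3)/2)*hA
  have q4 : (x 1 + x 4) - s*(x 2 - x 3) = 0 :=
    (mul_eq_zero.mp q3).resolve_left hApos.ne'
  have q5 : (1+s^2)*(x 2 - x 3) = 0 := by linear_combination c5 - s*q4
  have q6 : x 2 - x 3 = 0 :=
    (mul_eq_zero.mp q5).resolve_left (by positivity : (0:ℝ) < 1+s^2).ne'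
  have hx2 : x 2 = 0 := by linarith
  have hx3 : x 3 = 0 := by linarith
  have hx1 : x 1 = 0 := by
    have h14 : x 1 + x 4 = 0 := by linear_combination q4 + s*q6
    linarith [hd0]
  have hx4 : x 4 = 0 := by linarith [hd0]
  funext i
  fin_cases i
  exacts [hx0, hx1, hx2, hx3, hx4, hx5]

private lemma span_of (s t A B : ℝ) (hA : A^2 = 1 - 2*s*A) (hB : B^2 = 1 - 2*t*B)
    (hBpos : 0 < B) (hsA : 0 < s + A) (x : Fin 6 → ℝ)
    (c2 : A*x 1 - x 2 - A^2*x 3 + A*x 4 = 0)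
    (c3 : -B^2*x 0 - B*x 1 + B*x 4 + x 5 = 0)
    (c4 : -(x 0) + B*x 1 - B*x 4 + B^2*x 5 = 0)
    (c5 : s*x 1 + x 2 - x 3 + s*x 4 = 0)
    (c6 : x 0 + t*x 1 - t*x 4 + x 5 = 0) :
    x 0 = 0 ∧ x 5 = 0 ∧ x 1 = A*x 3 ∧ x 4 = A*x 3 ∧ x 2 = A^2*x 3 := by
  obtain ⟨hx0, hx5, hd0⟩ := Bpart t B hB hBpos x c3 c4 c6
  have m1 : (s+A)*(x 1 - A*x 3) = 0 := by
    linear_combination c2/2 + c5/2 + ((A+s)/2)*hd0 - (x 3/2)*hA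
  have m2 : x 1 = A*x 3 := by
    have := (mul_eq_zero.mp m1).resolve_left hsA.ne'
    linarith
  have m3 : x 2 = A^2*x 3 := by
    linear_combination c5 + s*hd0 - 2*s*m2 - x 3*hA
  exact ⟨hx0, hx5, m2, by rw [← hd0]; exact m2, m3⟩

/-- The explicit eigenvector computation for the ground state. -/
private lemma Hu (s t r : ℝ) (hr : r^2 = 1+s^2) :
    (Hsq s t).mulVec (fun i => ![0, r-s, (r-s)^2, 1, r-s, 0] i) =
      (4-2*r) • (fun i => ![0, r-s, (r-s)^2, 1, r-s, 0] i) := by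
  funext i
  fin_cases i <;>
    simp [Hsq, Matrix.mulVec, dotProduct, Fin.sum_univ_six, Matrix.add_apply,
      Matrix.smul_apply, Matrix.one_apply, cv5', cv4', cv3', cv2']
  · linear_combination hr
  · linear_combination (2*r - 2*s)*hr
  · ring
  · linear_combination hr

set_option maxHeartbeats 1600000 in
/-- For the square-graph two-particle Hamiltonian `H(s,t)`, whenever `|t| < |s|` the vector
`Ψ_A(s)` is a non-degenerate ground state with eigenvalue `4 - 2√(1+s²)`, independent of `t`;
its density has no zero or full occupation. Hence for fixed `s ≠ 0` all potentials with
`t ∈ (-|s|,|s|)` yield the same ground state, violating the Hohenberg–Kohn theorem. -/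
theorem square_HK_violation (s t : ℝ) (hst : |t| < |s|) :
    (Hsq s t).mulVec (PsiA s) = (4 - 2 * Real.sqrt (1 + s ^ 2)) • PsiA s ∧
    (∀ (μ : ℝ) (x : Fin 6 → ℝ), x ≠ 0 → (Hsq s t).mulVec x = μ • x →
      μ ≠ 4 - 2 * Real.sqrt (1 + s ^ 2) → 4 - 2 * Real.sqrt (1 + s ^ 2) < μ) ∧
    (∀ x : Fin 6 → ℝ, (Hsq s t).mulVec x = (4 - 2 * Real.sqrt (1 + s ^ 2)) • x →
      ∃ c : ℝ, x = c • PsiA s) ∧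
    (∀ r ∈ ({PsiA s 0 ^ 2 + PsiA s 1 ^ 2 + PsiA s 2 ^ 2,
              PsiA s 0 ^ 2 + PsiA s 3 ^ 2 + PsiA s 4 ^ 2,
              PsiA s 1 ^ 2 + PsiA s 3 ^ 2 + PsiA s 5 ^ 2,
              PsiA s 2 ^ 2 + PsiA s 4 ^ 2 + PsiA s 5 ^ 2} : Set ℝ),
        0 < r ∧ r < 1) := by
  have hs2 : (0:ℝ) < 1 + s^2 := by positivity
  have ht2 : (0:ℝ) < 1 + t^2 := by positivity
  have hr : (Real.sqrt (1+s^2))^2 = 1+s^2 := Real.sq_sqrt hs2.le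
  have hq : (Real.sqrt (1+t^2))^2 = 1+t^2 := Real.sq_sqrt ht2.le
  obtain ⟨R, hRdef⟩ : ∃ R, Real.sqrt (1+s^2) = R := ⟨_, rfl⟩
  obtain ⟨Q, hQdef⟩ : ∃ Q, Real.sqrt (1+t^2) = Q := ⟨_, rfl⟩
  rw [hRdef] at hr
  rw [hQdef] at hq
  have hR0 : 0 ≤ R := hRdef ▸ Real.sqrt_nonneg _
  have hQ0 : 0 ≤ Q := hQdef ▸ Real.sqrt_nonneg _
  have hR1 : 1 ≤ R := by nlinarith [sq_nonneg s]
  have hQ1 : 1 ≤ Q := by nlinarith [sq_nonneg t]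
  have hRs : s < R := by nlinarith
  have hQt : t < Q := by nlinarith
  have hts : t^2 < s^2 := by nlinarith [abs_nonneg t, sq_abs s, sq_abs t]
  have hgap : Q < R := by nlinarith
  have hA : (R-s)^2 = 1 - 2*s*(R-s) := by linear_combination hr
  have hB : (Q-t)^2 = 1 - 2*t*(Q-t) := by linear_combination hq
  have hApos : 0 < R - s := by linarith
  have hBpos : 0 < Q - t := by linarith
  have hden : (0:ℝ) < 1 + (R-s)^2 := by positivity
  have hal : sqAlpha s = R - s := by rw [sqAlpha, show (1+s^2 : ℝ) = 1+s^2 from rfl, hRdef]; ring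
  -- PsiA as a scalar multiple of the integral eigenvector
  have hPsi : PsiA s = (1/(1+(R-s)^2)) • (fun i => ![0, R-s, (R-s)^2, 1, R-s, 0] i) := by
    funext i
    fin_cases i <;> simp [PsiA, hal]
  have hval0 : PsiA s 0 = 0 := by simp [PsiA]
  have hval5 : PsiA s 5 = 0 := by simp [PsiA, cv5', cv4', cv3', cv2']
  have hval1 : PsiA s 1 = (1/(1+(R-s)^2)) * (R-s) := by simp [PsiA, hal]
  have hval2 : PsiA s 2 = (1/(1+(R-s)^2)) * (R-s)^2 := by simp [PsiA, hal]
  have hval3 : PsiA s 3 = (1/(1+(R-s)^2)) := by simp [PsiA, hal]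
  have hval4 : PsiA s 4 = (1/(1+(R-s)^2)) * (R-s) := by simp [PsiA, hal]
  have hsqrt : 4 - 2 * Real.sqrt (1 + s ^ 2) = 4 - 2*R := by rw [hRdef]
  refine ⟨?_, ?_, ?_, ?_⟩
  · -- eigenvector equation
    rw [hsqrt, hPsi, Matrix.mulVec_smul, Hu s t R hr]
    rw [smul_comm]
  · -- ground state is strictly below all other eigenvalues
    intro μ x hx0 hx hμ
    rw [hsqrt] at hμ ⊢
    obtain ⟨h1, h2, h3, h4, h5, h6⟩ := eig_products s t μ R Q hr hq x hx
    rcases mul_eq_zero.mp h1 with hm | hc1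
    · exact absurd (by linarith : μ = 4 - 2*R) hμ
    rcases mul_eq_zero.mp h2 with hm | hc2
    · linarith
    rcases mul_eq_zero.mp h3 with hm | hc3
    · linarith
    rcases mul_eq_zero.mp h4 with hm | hc4
    · linarith
    rcases mul_eq_zero.mp h5 with hm | hc5
    · linarith
    rcases mul_eq_zero.mp h6 with hm | hc6
    · linarith
    exact absurd (zero_of s t (R-s) (Q-t) hA hB hApos hBpos x
      (by linarith [hc1]) (by linarith [hc2]) (by linear_combination hc3)
      (by linear_combination hc4) hc5 hc6) hx0
  · -- the eigenspace is one-dimensional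
    intro x hx
    rw [hsqrt] at hx
    obtain ⟨h1, h2, h3, h4, h5, h6⟩ := eig_products s t (4-2*R) R Q hr hq x hx
    have hc2 := (mul_eq_zero.mp h2).resolve_left
      (show (0:ℝ) < 4+2*R-(4-2*R) by linarith).ne'
    have hc3 := (mul_eq_zero.mp h3).resolve_left
      (show (0:ℝ) < 4-2*Q-(4-2*R) by linarith).ne'
    have hc4 := (mul_eq_zero.mp h4).resolve_left
      (show (0:ℝ) < 4+2*Q-(4-2*R) by linarith).ne'
    have hc5 := (mul_eq_zero.mp h5).resolve_left
      (show (0:ℝ) < 4-(4-2*R) by linarith).ne'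
    have hc6 := (mul_eq_zero.mp h6).resolve_left
      (show (0:ℝ) < 4-(4-2*R) by linarith).ne'
    obtain ⟨hx0, hx5, hx1, hx4, hx2⟩ := span_of s t (R-s) (Q-t) hA hB hBpos
      (by linarith : 0 < s + (R-s)) x (by linear_combination hc2)
      (by linear_combination hc3) (by linear_combination hc4) hc5 hc6
    refine ⟨(1+(R-s)^2) * x 3, ?_⟩
    funext i
    fin_cases i <;> simp only [Pi.smul_apply, smul_eq_mul]
    · show x 0 = (1+(R-s)^2) * x 3 * PsiA s 0
      rw [hval0, hx0]; ring
    · show x 1 = (1+(R-s)^2) * x 3 * PsiA s 1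
      rw [hval1, hx1]; field_simp
    · show x 2 = (1+(R-s)^2) * x 3 * PsiA s 2
      rw [hval2, hx2]; field_simp
    · show x 3 = (1+(R-s)^2) * x 3 * PsiA s 3
      rw [hval3]; field_simp
    · show x 4 = (1+(R-s)^2) * x 3 * PsiA s 4
      rw [hval4, hx4]; field_simp
    · show x 5 = (1+(R-s)^2) * x 3 * PsiA s 5
      rw [hval5, hx5]; ring
  · -- densities strictly between 0 and 1
    intro ρ hρ
    have key1 : (0:ℝ) < (R-s)^2/(1+(R-s)^2) ∧ (R-s)^2/(1+(R-s)^2) < 1 := by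
      constructor
      · apply div_pos (by positivity) hden
      · rw [div_lt_one hden]; linarith
    have key2 : (0:ℝ) < 1/(1+(R-s)^2) ∧ 1/(1+(R-s)^2) < 1 := by
      constructor
      · positivity
      · rw [div_lt_one hden]; nlinarith
    simp only [Set.mem_insert_iff, Set.mem_singleton_iff] at hρ
    rcases hρ with h | h | h | h
    · rw [h, hval0, hval1, hval2,
        show (0:ℝ)^2 + (1/(1+(R-s)^2) * (R-s))^2 + (1/(1+(R-s)^2) * (R-s)^2)^2
          = (R-s)^2/(1+(R-s)^2) by field_simp; ring]
      exact key1
    · rw [h, hval0, hval3, hval4,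
        show (0:ℝ)^2 + (1/(1+(R-s)^2))^2 + (1/(1+(R-s)^2) * (R-s))^2
          = 1/(1+(R-s)^2) by field_simp; ring]
      exact key2
    · rw [h, hval1, hval3, hval5,
        show (1/(1+(R-s)^2) * (R-s))^2 + (1/(1+(R-s)^2))^2 + (0:ℝ)^2
          = 1/(1+(R-s)^2) by field_simp; ring]
      exact key2
    · rw [h, hval2, hval4, hval5,
        show (1/(1+(R-s)^2) * (R-s)^2)^2 + (1/(1+(R-s)^2) * (R-s))^2 + (0:ℝ)^2
          = (R-s)^2/(1+(R-s)^2) by field_simp; ring]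
      exact key1
end

section
/- Consider the Hamiltonian of N fermions on a linear chain: H = Σ_j Σ_{i=j±1} h_ij â_i†â_j + W acting on Λ^N ℂ^M, where h is real symmetric with h_{i,i±1} < 0 and zero other off-diagonal entries, and W is diagonal in the basis {e_I}. Then all off-diagonal matrix elements of H in the basis {e_I} are ≤ 0, the associated fermionic graph G(H) is connected, and consequently the ground state of H is non-degenerate and can be chosen with all coefficients Ψ_I > 0. -/
open scoped BigOperators

abbrev FIdx (M N : ℕ) := {I : Finset (Fin M) // I.card = N}

/-- `Hop I J i j` : the configuration `J` is obtained from `I` by moving one particle from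
vertex `j` to the nearest-neighbour vertex `i` on the linear chain. -/
def Hop {M : ℕ} (I J : Finset (Fin M)) (i j : Fin M) : Prop :=
  j ∈ I ∧ i ∉ I ∧ J = insert i (I.erase j) ∧ ((i : ℕ) = (j : ℕ) + 1 ∨ (j : ℕ) = (i : ℕ) + 1)

instance {M : ℕ} (I J : Finset (Fin M)) (i j : Fin M) : Decidable (Hop I J i j) := by
  unfold Hop; infer_instance

open Matrix Finset

lemma hop_ne {M : ℕ} {i j : Fin M} (hadj : (i : ℕ) = (j : ℕ) + 1 ∨ (j : ℕ) = (i : ℕ) + 1) :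
    i ≠ j := by
  rcases hadj with h | h <;> (intro he; subst he; omega)

lemma hop_symm' {M : ℕ} {I J : Finset (Fin M)} {i j : Fin M} (h : Hop I J i j) :
    Hop J I j i := by
  obtain ⟨hj, hi, hJ, hadj⟩ := h
  have hij : i ≠ j := hop_ne hadj
  have hiJ : i ∈ J := by rw [hJ]; exact Finset.mem_insert_self _ _
  have hjJ : j ∉ J := by
    rw [hJ]; intro hmem
    rcases Finset.mem_insert.mp hmem with h' | h'
    · exact hij h'.symm
    · exact (Finset.notMem_erase _ _) h'
  refine ⟨hiJ, hjJ, ?_, hadj.symm⟩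
  have h1 : J.erase i = I.erase j := by
    rw [hJ, Finset.erase_insert]
    intro hmem; exact hi (Finset.mem_of_mem_erase hmem)
  rw [h1, Finset.insert_erase hj]

lemma hop_unique' {M : ℕ} {I J : Finset (Fin M)} {i j i' j' : Fin M}
    (h : Hop I J i j) (h' : Hop I J i' j') : i' = i ∧ j' = j := by
  obtain ⟨hj, hi, hJ, hadj⟩ := h
  obtain ⟨hj', hi', hJ', hadj'⟩ := h'
  constructor
  · have hi'J : i' ∈ J := by rw [hJ']; exact Finset.mem_insert_self _ _
    rw [hJ] at hi'J
    rcases Finset.mem_insert.mp hi'J with h'' | h''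
    · exact h''
    · exact absurd (Finset.mem_of_mem_erase h'') hi'
  · have hj'J : j' ∉ J := (hop_symm' ⟨hj', hi', hJ', hadj'⟩).2.1
    rw [hJ] at hj'J
    by_contra hne
    exact hj'J (Finset.mem_insert_of_mem (Finset.mem_erase.mpr ⟨hne, hj'⟩))

-- sum collapse
lemma hop_sum_eq {M : ℕ} (h : Matrix (Fin M) (Fin M) ℝ) {I J : Finset (Fin M)}
    {i j : Fin M} (hop : Hop I J i j) :
    ∑ i' : Fin M, ∑ j' : Fin M, (if Hop I J i' j' then h i' j' else 0) = h i j := by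
  rw [Finset.sum_eq_single_of_mem i (Finset.mem_univ i)]
  · rw [Finset.sum_eq_single_of_mem j (Finset.mem_univ j)]
    · rw [if_pos hop]
    · intro j' _ hne
      rw [if_neg]
      intro hop'
      exact hne (hop_unique' hop hop').2
  · intro i' _ hne
    apply Finset.sum_eq_zero
    intro j' _
    rw [if_neg]
    intro hop'
    exact hne (hop_unique' hop hop').1
def groundF (M N : ℕ) (hNM : N ≤ M) : Finset (Fin M) :=
  (Finset.univ : Finset (Fin N)).map (Fin.castLEEmb hNM)

lemma mem_groundF {M N : ℕ} (hNM : N ≤ M) (x : Fin M) :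
    x ∈ groundF M N hNM ↔ (x : ℕ) < N := by
  simp only [groundF, Finset.mem_map, Finset.mem_univ, true_and]
  constructor
  · rintro ⟨a, rfl⟩; exact a.2
  · intro hx; exact ⟨⟨x, hx⟩, by ext; simp⟩

lemma card_groundF {M N : ℕ} (hNM : N ≤ M) : (groundF M N hNM).card = N := by
  simp [groundF]

lemma downclosed {M : ℕ} {I : Finset (Fin M)}
    (hstep : ∀ j ∈ I, ∀ k : Fin M, (j : ℕ) = (k : ℕ) + 1 → k ∈ I) :
    ∀ d (x : Fin M), x ∈ I → ∀ k : Fin M, (x : ℕ) = (k : ℕ) + d → k ∈ I := by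
  intro d
  induction d with
  | zero => intro x hx k hk; have : k = x := Fin.ext (by omega); rwa [this]
  | succ d ih =>
    intro x hx k hk
    have hlt : (k : ℕ) + d < M := lt_of_le_of_lt (by omega) x.2
    have hk' : (⟨(k : ℕ) + d, hlt⟩ : Fin M) ∈ I := hstep x hx _ (by simp; omega)
    exact ih _ hk' k rfl

lemma eq_ground_of_step {M N : ℕ} (hNM : N ≤ M) {I : Finset (Fin M)} (hcard : I.card = N)
    (hstep : ∀ j ∈ I, ∀ k : Fin M, (j : ℕ) = (k : ℕ) + 1 → k ∈ I) :
    I = groundF M N hNM := by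
  have hsub : I ⊆ groundF M N hNM := by
    intro x hx
    rw [mem_groundF]
    by_contra hge
    push_neg at hge
    -- all values ≤ x.val are in I, giving x.val + 1 ≤ N elements
    have hxM : (x : ℕ) < M := x.2
    have hsub' : (Finset.univ : Finset (Fin ((x : ℕ) + 1))).map (Fin.castLEEmb hxM) ⊆ I := by
      intro y hy
      simp only [Finset.mem_map, Finset.mem_univ, true_and] at hy
      obtain ⟨a, rfl⟩ := hy
      have ha : ((Fin.castLEEmb hxM) a : ℕ) ≤ (x : ℕ) := by
        simpa using Nat.lt_succ_iff.mp a.2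
      exact downclosed hstep ((x : ℕ) - ((Fin.castLEEmb hxM) a : ℕ)) x hx _ (by omega)
    have hcard' := Finset.card_le_card hsub'
    simp [hcard] at hcard'
    omega
  exact Finset.eq_of_subset_of_card_le hsub (by rw [card_groundF, hcard])
open Matrix Finset

variable {n : Type*} [Fintype n] [DecidableEq n]

/-- zero propagation along an edge for a nonnegative eigenvector -/
lemma pf_prop (A : Matrix n n ℝ) (hoff : ∀ i j, i ≠ j → A i j ≤ 0)
    {t : ℝ} {y : n → ℝ} (heig : A.mulVec y = t • y) (hnn : ∀ i, 0 ≤ y i)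
    {a b : n} (hab : a ≠ b) (hAab : A a b ≠ 0) (ha : y a = 0) : y b = 0 := by
  have hsum : ∑ j, A a j * y j = 0 := by
    have := congrFun heig a
    simpa [Matrix.mulVec, dotProduct, ha] using this
  have hterm : ∀ j ∈ Finset.univ, A a j * y j ≤ 0 := by
    intro j _
    by_cases hj : j = a
    · subst hj; simp [ha]
    · exact mul_nonpos_of_nonpos_of_nonneg (hoff a j (Ne.symm hj)) (hnn j)
  have hz := (Finset.sum_eq_zero_iff_of_nonpos hterm).mp hsum b (Finset.mem_univ b)
  rcases mul_eq_zero.mp hz with h | h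
  · exact absurd h hAab
  · exact h

lemma pf_pos (A : Matrix n n ℝ) (hoff : ∀ i j, i ≠ j → A i j ≤ 0)
    (hconn : ∀ i j, Relation.ReflTransGen (fun a b => a ≠ b ∧ A a b ≠ 0) i j)
    {t : ℝ} {y : n → ℝ} (heig : A.mulVec y = t • y) (hnn : ∀ i, 0 ≤ y i)
    (hy : y ≠ 0) : ∀ i, 0 < y i := by
  have key : ∀ a b : n, Relation.ReflTransGen (fun a b => a ≠ b ∧ A a b ≠ 0) a b →
      y a = 0 → y b = 0 := by
    intro a b hpath
    induction hpath with
    | refl => exact id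
    | tail _ step ih => exact fun h0 => pf_prop A hoff heig hnn step.1 step.2 (ih h0)
  obtain ⟨i₀, hi₀⟩ := Function.ne_iff.mp hy
  intro i
  rcases lt_or_eq_of_le (hnn i) with h | h
  · exact h
  · exact absurd (key i i₀ (hconn i i₀) h.symm) (by simpa using hi₀)

lemma pf_main [Nonempty n] (A : Matrix n n ℝ) (hA : A.IsHermitian)
    (hoff : ∀ i j, i ≠ j → A i j ≤ 0)
    (hconn : ∀ i j, Relation.ReflTransGen (fun a b => a ≠ b ∧ A a b ≠ 0) i j) :
    ∃ (lam : ℝ) (Ψ : n → ℝ),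
      A.mulVec Ψ = lam • Ψ ∧ (∀ i, 0 < Ψ i) ∧
      (∀ (μ : ℝ) (x : n → ℝ), x ≠ 0 → A.mulVec x = μ • x → lam ≤ μ) ∧
      (∀ x : n → ℝ, A.mulVec x = lam • x → ∃ c : ℝ, x = c • Ψ) := by
  classical
  set ev := hA.eigenvalues with hev
  set lam := Finset.univ.inf' Finset.univ_nonempty ev with hlamdef
  have hlam_le : ∀ i, lam ≤ ev i := fun i => Finset.inf'_le _ (Finset.mem_univ i)
  obtain ⟨i₀, -, hi₀⟩ := Finset.exists_mem_eq_inf' Finset.univ_nonempty ev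
  set U : Matrix n n ℝ := (hA.eigenvectorUnitary : Matrix n n ℝ) with hUdef
  have hUU : U * star U = 1 := (Matrix.mem_unitaryGroup_iff).mp (hA.eigenvectorUnitary).2
  have hsU : star U = Uᵀ := by ext i j; simp [Matrix.star_apply]
  have hspec : A = U * diagonal ev * star U := by simpa using hA.spectral_theorem
  -- coordinates in the eigenbasis
  set c : (n → ℝ) → (n → ℝ) := fun y => Uᵀ *ᵥ y with hcdef
  have hUc : ∀ y, U *ᵥ c y = y := by
    intro y
    rw [hcdef]
    simp only [Matrix.mulVec_mulVec]
    rw [← hsU, hUU, Matrix.one_mulVec]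
  have hAy : ∀ y, A *ᵥ y = U *ᵥ (fun i => ev i * c y i) := by
    intro y
    have h2 : (fun i => ev i * c y i) = diagonal ev *ᵥ (Uᵀ *ᵥ y) := by
      funext i; simp [Matrix.mulVec_diagonal, hcdef]
    rw [h2, Matrix.mulVec_mulVec, Matrix.mulVec_mulVec, ← hsU, ← hspec]
  have hdotU : ∀ y w : n → ℝ, y ⬝ᵥ (U *ᵥ w) = c y ⬝ᵥ w := by
    intro y w
    rw [Matrix.dotProduct_mulVec, hcdef, ← Matrix.mulVec_transpose]
  have hQ : ∀ y : n → ℝ, y ⬝ᵥ (A *ᵥ y) = ∑ i, ev i * (c y i)^2 := by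
    intro y
    rw [hAy, hdotU]
    simp only [dotProduct]
    exact Finset.sum_congr rfl (fun i _ => by ring)
  have hNorm : ∀ y : n → ℝ, y ⬝ᵥ y = ∑ i, (c y i)^2 := by
    intro y
    have h1 : y ⬝ᵥ y = y ⬝ᵥ (U *ᵥ c y) := by rw [hUc]
    rw [h1, hdotU]
    simp only [hcdef, dotProduct]
    exact Finset.sum_congr rfl (fun i _ => by ring)
  -- lower bound for the quadratic form
  have hGE : ∀ y : n → ℝ, lam * (y ⬝ᵥ y) ≤ y ⬝ᵥ (A *ᵥ y) := by
    intro y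
    rw [hQ, hNorm, Finset.mul_sum]
    exact Finset.sum_le_sum fun i _ =>
      mul_le_mul_of_nonneg_right (hlam_le i) (sq_nonneg _)
  -- equality case: a minimizer of the Rayleigh quotient is an eigenvector
  have hEQ : ∀ y : n → ℝ, y ⬝ᵥ (A *ᵥ y) = lam * (y ⬝ᵥ y) → A.mulVec y = lam • y := by
    intro y hy
    have hzero : ∑ i, (ev i - lam) * (c y i)^2 = 0 := by
      rw [hQ, hNorm, Finset.mul_sum] at hy
      have : ∑ i, ((ev i - lam) * (c y i)^2) =
          (∑ i, ev i * (c y i)^2) - ∑ i, lam * (c y i)^2 := by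
        rw [← Finset.sum_sub_distrib]
        exact Finset.sum_congr rfl fun i _ => by ring
      rw [this, hy]; ring
    have hterm : ∀ i ∈ Finset.univ, (0:ℝ) ≤ (ev i - lam) * (c y i)^2 := fun i _ =>
      mul_nonneg (by linarith [hlam_le i]) (sq_nonneg _)
    have heach := (Finset.sum_eq_zero_iff_of_nonneg hterm).mp hzero
    have hpt : (fun i => ev i * c y i) = lam • c y := by
      funext i
      have := heach i (Finset.mem_univ i)
      rcases mul_eq_zero.mp this with h | h
      · have he : ev i = lam := by linarith
        simp [he]
      · have : c y i = 0 := pow_eq_zero_iff (n := 2) (by norm_num) |>.mp h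
        simp [this]
    show A *ᵥ y = lam • y
    rw [hAy, hpt, Matrix.mulVec_smul, hUc]
  -- the ground eigenvector from the basis
  set v₀ : n → ℝ := ⇑(hA.eigenvectorBasis i₀) with hv₀
  have hv₀eig : A *ᵥ v₀ = lam • v₀ := by
    rw [hv₀, hA.mulVec_eigenvectorBasis i₀, hlamdef, hi₀]
  have hv₀ne : v₀ ≠ 0 := by
    intro h0
    apply hA.eigenvectorBasis.orthonormal.ne_zero i₀
    ext k
    exact congrFun h0 k
  -- |x| is an eigenvector whenever x is (for eigenvalue lam)
  have habs : ∀ x : n → ℝ, A.mulVec x = lam • x →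
      A.mulVec (fun i => |x i|) = lam • (fun i => |x i|) := by
    intro x hx
    set z : n → ℝ := fun i => |x i| with hz
    have hnz : z ⬝ᵥ z = x ⬝ᵥ x := by
      simp only [dotProduct, hz]
      exact Finset.sum_congr rfl fun i _ => by rw [abs_mul_abs_self]
    have hQle : z ⬝ᵥ (A *ᵥ z) ≤ x ⬝ᵥ (A *ᵥ x) := by
      simp only [dotProduct, Matrix.mulVec, Finset.mul_sum]
      refine Finset.sum_le_sum fun i _ => Finset.sum_le_sum fun j _ => ?_
      by_cases hij : i = j
      · subst hij
        have : z i * (A i i * z i) = x i * (A i i * x i) := by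
          simp only [hz]; rw [show ∀ a b : ℝ, |a| * (b * |a|) = b * (|a| * |a|) from fun a b => by ring,
            abs_mul_abs_self]; ring
        exact le_of_eq this
      · have h1 : x i * x j ≤ |x i * x j| := le_abs_self _
        have h2 : A i j * |x i * x j| ≤ A i j * (x i * x j) :=
          mul_le_mul_of_nonpos_left h1 (hoff i j hij)
        calc z i * (A i j * z j) = A i j * |x i * x j| := by
              simp only [hz]; rw [abs_mul]; ring
          _ ≤ A i j * (x i * x j) := h2
          _ = x i * (A i j * x j) := by ring
    have hxQ : x ⬝ᵥ (A *ᵥ x) = lam * (x ⬝ᵥ x) := by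
      rw [hx]; simp
    have : z ⬝ᵥ (A *ᵥ z) = lam * (z ⬝ᵥ z) := by
      have hge := hGE z
      rw [hnz] at hge ⊢
      linarith [hQle, hxQ ▸ le_refl (x ⬝ᵥ (A *ᵥ x))]
    exact hEQ z this
  -- nonvanishing of eigenvectors for lam
  have hnv : ∀ x : n → ℝ, x ≠ 0 → A.mulVec x = lam • x → ∀ i, x i ≠ 0 := by
    intro x hx0 hx i
    have hzeig := habs x hx
    have hzne : (fun i => |x i|) ≠ 0 := by
      intro h0
      apply hx0
      funext k
      have := congrFun h0 k
      simpa [abs_eq_zero] using this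
    have := pf_pos A hoff hconn hzeig (fun i => abs_nonneg _) hzne i
    intro h0
    rw [h0] at this
    simp at this
  -- the positive ground state
  set Ψ : n → ℝ := fun i => |v₀ i| with hΨ
  have hΨeig : A.mulVec Ψ = lam • Ψ := habs v₀ hv₀eig
  have hΨne : Ψ ≠ 0 := by
    intro h0
    apply hv₀ne
    funext k
    have := congrFun h0 k
    simpa [hΨ, abs_eq_zero] using this
  have hΨpos : ∀ i, 0 < Ψ i := pf_pos A hoff hconn hΨeig (fun i => abs_nonneg _) hΨne
  refine ⟨lam, Ψ, hΨeig, hΨpos, ?_, ?_⟩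
  · -- minimality of lam
    intro μ x hx0 hx
    have hxx : 0 < x ⬝ᵥ x := by
      rcases Function.ne_iff.mp hx0 with ⟨i, hi⟩
      have : (0:ℝ) < x i * x i := mul_self_pos.mpr (by simpa using hi)
      refine lt_of_lt_of_le this ?_
      rw [dotProduct]
      exact Finset.single_le_sum (fun j _ => mul_self_nonneg (x j)) (Finset.mem_univ i)
    have h1 : lam * (x ⬝ᵥ x) ≤ x ⬝ᵥ (A *ᵥ x) := hGE x
    have h2 : x ⬝ᵥ (A *ᵥ x) = μ * (x ⬝ᵥ x) := by
      rw [hx]; simp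
    rw [h2] at h1
    exact le_of_mul_le_mul_right (by linarith) hxx
  · -- uniqueness up to scalar
    intro x hx
    set a : n := Classical.arbitrary n
    set co : ℝ := x a / Ψ a with hco
    refine ⟨co, ?_⟩
    by_contra hne
    have hu : A.mulVec (x - co • Ψ) = lam • (x - co • Ψ) := by
      rw [Matrix.mulVec_sub, Matrix.mulVec_smul, hx, hΨeig, smul_smul, smul_sub, smul_smul,
        mul_comm]
    have hune : x - co • Ψ ≠ 0 := fun h0 => hne (by
      have := sub_eq_zero.mp h0
      exact this)
    have := hnv (x - co • Ψ) hune hu a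
    apply this
    have hΨa : Ψ a ≠ 0 := ne_of_gt (hΨpos a)
    simp only [Pi.sub_apply, Pi.smul_apply, smul_eq_mul, hco]
    rw [div_mul_cancel₀ _ hΨa, sub_self]

/-- For `N` fermions on a linear chain, `H = Σ_{i=j±1} h_ij â_i†â_j + W` with `h_{i,i±1} < 0`
and `W` diagonal in the `{e_I}` basis: all off-diagonal matrix elements of `H` are `≤ 0`,
the fermionic graph `G(H)` is connected, and the ground state is non-degenerate and can be
chosen with all coefficients strictly positive (hence uniquely `v`-representable). -/
theorem linear_chain_positive_ground_state (M N : ℕ) (hNM : N ≤ M)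
    (h : Matrix (Fin M) (Fin M) ℝ) (hsym : h.IsSymm)
    (hneg : ∀ i j : Fin M, ((i : ℕ) = (j : ℕ) + 1 ∨ (j : ℕ) = (i : ℕ) + 1) → h i j < 0)
    (H : Matrix (FIdx M N) (FIdx M N) ℝ)
    (hH : ∀ I J : FIdx M N, I ≠ J →
      H I J = ∑ i : Fin M, ∑ j : Fin M, if Hop I.1 J.1 i j then h i j else 0) :
    (∀ I J : FIdx M N, I ≠ J → H I J ≤ 0) ∧
    (∀ I J : FIdx M N,
      Relation.ReflTransGen (fun A B : FIdx M N => A ≠ B ∧ H A B ≠ 0) I J) ∧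
    ∃ (lam : ℝ) (Ψ : FIdx M N → ℝ),
      H.mulVec Ψ = lam • Ψ ∧
      (∀ I, 0 < Ψ I) ∧
      (∀ (μ : ℝ) (x : FIdx M N → ℝ), x ≠ 0 → H.mulVec x = μ • x → lam ≤ μ) ∧
      (∀ x : FIdx M N → ℝ, H.mulVec x = lam • x → ∃ c : ℝ, x = c • Ψ) := by
  classical
  haveI hnonempty : Nonempty (FIdx M N) := ⟨⟨groundF M N hNM, card_groundF hNM⟩⟩
  have hsymval : ∀ a b : Fin M, h a b = h b a := fun a b => hsym.apply b a
  -- Part 1 : off-diagonal matrix elements are ≤ 0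
  have hoff : ∀ I J : FIdx M N, I ≠ J → H I J ≤ 0 := by
    intro I J hIJ
    rw [hH I J hIJ]
    apply Finset.sum_nonpos; intro i _
    apply Finset.sum_nonpos; intro j _
    by_cases hc : Hop I.1 J.1 i j
    · rw [if_pos hc]; exact le_of_lt (hneg i j hc.2.2.2)
    · rw [if_neg hc]
  -- matrix element in presence of a hop
  have hHhop : ∀ (I J : FIdx M N) (i j : Fin M), Hop I.1 J.1 i j →
      I ≠ J ∧ H I J = h i j := by
    intro I J i j hop
    have hiJ : i ∈ J.1 := by rw [hop.2.2.1]; exact Finset.mem_insert_self _ _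
    have hIJ : I ≠ J := by
      intro he; rw [← he] at hiJ; exact hop.2.1 hiJ
    exact ⟨hIJ, by rw [hH I J hIJ]; exact hop_sum_eq h hop⟩
  -- symmetry of H
  have hsymH : ∀ I J : FIdx M N, H I J = H J I := by
    intro I J
    by_cases hIJ : I = J
    · rw [hIJ]
    · rw [hH I J hIJ, hH J I (Ne.symm hIJ), Finset.sum_comm]
      apply Finset.sum_congr rfl; intro a _
      apply Finset.sum_congr rfl; intro b _
      by_cases hc : Hop I.1 J.1 b a
      · rw [if_pos hc, if_pos (hop_symm' hc), hsymval b a]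
      · rw [if_neg hc, if_neg (fun hc' => hc (hop_symm' hc'))]
  have hherm : H.IsHermitian := by
    apply Matrix.ext
    intro I J
    rw [Matrix.conjTranspose_apply, star_trivial]
    exact hsymH J I
  -- connectivity
  set Gd : FIdx M N := ⟨groundF M N hNM, card_groundF hNM⟩ with hGd
  have toGround : ∀ (m : ℕ), ∀ (I : FIdx M N), (∑ x ∈ I.1, (x : ℕ)) = m →
      Relation.ReflTransGen (fun A B : FIdx M N => A ≠ B ∧ H A B ≠ 0) I Gd := by
    intro m
    induction m using Nat.strong_induction_on with
    | _ m ih =>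
      intro I hm
      by_cases hIG : I = Gd
      · rw [hIG]
      · have hne' : I.1 ≠ groundF M N hNM := fun he => hIG (Subtype.ext he)
        have hstepfail : ¬ (∀ j ∈ I.1, ∀ k : Fin M, (j : ℕ) = (k : ℕ) + 1 → k ∈ I.1) :=
          fun hs => hne' (eq_ground_of_step hNM I.2 hs)
        push_neg at hstepfail
        obtain ⟨j, hjI, k, hjk, hkI⟩ := hstepfail
        have hkj : k ∉ I.1.erase j := fun hmem => hkI (Finset.mem_of_mem_erase hmem)
        have hNpos : 0 < N := by rw [← I.2]; exact Finset.card_pos.mpr ⟨j, hjI⟩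
        have hcardJ : (insert k (I.1.erase j)).card = N := by
          rw [Finset.card_insert_of_notMem hkj, Finset.card_erase_of_mem hjI, I.2]
          omega
        set J : FIdx M N := ⟨insert k (I.1.erase j), hcardJ⟩ with hJdef
        have hop : Hop I.1 J.1 k j := ⟨hjI, hkI, rfl, Or.inr hjk⟩
        obtain ⟨hIJ, hHIJ⟩ := hHhop I J k j hop
        have hedge : I ≠ J ∧ H I J ≠ 0 :=
          ⟨hIJ, by rw [hHIJ]; exact ne_of_lt (hneg k j (Or.inr hjk))⟩
        have hs : (j : ℕ) + ∑ x ∈ I.1.erase j, (x : ℕ) = m := by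
          rw [← hm]; exact Finset.add_sum_erase _ _ hjI
        have hm' : (∑ x ∈ J.1, (x : ℕ)) = (k : ℕ) + ∑ x ∈ I.1.erase j, (x : ℕ) := by
          show (∑ x ∈ insert k (I.1.erase j), (x : ℕ)) = _
          rw [Finset.sum_insert hkj]
        have hlt : (∑ x ∈ J.1, (x : ℕ)) < m := by rw [hm']; omega
        exact Relation.ReflTransGen.head hedge (ih _ hlt J rfl)
  have hconn : ∀ I J : FIdx M N,
      Relation.ReflTransGen (fun A B : FIdx M N => A ≠ B ∧ H A B ≠ 0) I J := by
    have hsymrel : Symmetric (fun A B : FIdx M N => A ≠ B ∧ H A B ≠ 0) :=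
      fun A B hab => ⟨hab.1.symm, by rw [hsymH B A]; exact hab.2⟩
    intro I J
    exact (toGround _ I rfl).trans ((@Relation.ReflTransGen.stdSymm _ _ ⟨fun a b hab => hsymrel hab⟩).symm _ _ (toGround _ J rfl))
  exact ⟨hoff, hconn, pf_main H hherm hoff hconn⟩
end

section
/- For the triangle graph two-particle system, the value of T(φ₁,φ₂) = α₁cos φ₁ - α₂cos φ₂ - α₃cos(φ₁-φ₂) at its interior stationary point (where ∂T/∂φ₁ = ∂T/∂φ₂ = 0 with sin φ₁ ≠ 0) equals -(α₁α₃/(2α₂) + α₂α₃/(2α₁) + α₁α₂/(2α₃)); in particular, if α₁ = √((1-ρ₁)(1-ρ₃)), α₂ = √((1-ρ₁)(1-ρ₂)), α₃ = √((1-ρ₂)(1-ρ₃)) with ρ₁+ρ₂+ρ₃ = 2 and all 0 < ρ_i < 1, this stationary value is -1/2. -/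
open Real

/-- For the triangle-graph constrained search, the value of
`T(φ₁,φ₂) = α₁cos φ₁ - α₂cos φ₂ - α₃cos(φ₁-φ₂)` at an interior stationary point (where
`α₁ sin φ₁ = α₃ sin(φ₁-φ₂) = α₂ sin φ₂` and `sin φ₁ ≠ 0`) equals
`-(α₁α₃/(2α₂) + α₂α₃/(2α₁) + α₁α₂/(2α₃))`; in particular, for the `α`'s arising from a
density `ρ` with `ρ₁+ρ₂+ρ₃ = 2` and `0 < ρᵢ < 1`, this stationary value is `-1/2`. -/
theorem triangle_stationary_value (α₁ α₂ α₃ φ₁ φ₂ : ℝ)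
    (hα₁ : 0 < α₁) (hα₂ : 0 < α₂) (hα₃ : 0 < α₃)
    (hs1 : α₁ * sin φ₁ = α₃ * sin (φ₁ - φ₂))
    (hs2 : α₂ * sin φ₂ = α₃ * sin (φ₁ - φ₂))
    (hsin : sin φ₁ ≠ 0) :
    (α₁ * cos φ₁ - α₂ * cos φ₂ - α₃ * cos (φ₁ - φ₂) =
      -(α₁ * α₃ / (2 * α₂) + α₂ * α₃ / (2 * α₁) + α₁ * α₂ / (2 * α₃))) ∧
    (∀ ρ₁ ρ₂ ρ₃ : ℝ, 0 < ρ₁ → ρ₁ < 1 → 0 < ρ₂ → ρ₂ < 1 → 0 < ρ₃ → ρ₃ < 1 →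
      ρ₁ + ρ₂ + ρ₃ = 2 →
      α₁ = Real.sqrt ((1 - ρ₁) * (1 - ρ₃)) →
      α₂ = Real.sqrt ((1 - ρ₁) * (1 - ρ₂)) →
      α₃ = Real.sqrt ((1 - ρ₂) * (1 - ρ₃)) →
      -(α₁ * α₃ / (2 * α₂) + α₂ * α₃ / (2 * α₁) + α₁ * α₂ / (2 * α₃)) = -(1 / 2)) := by
  have ha1 : (α₁ : ℝ) ≠ 0 := ne_of_gt hα₁
  have ha2 : (α₂ : ℝ) ≠ 0 := ne_of_gt hα₂
  have ha3 : (α₃ : ℝ) ≠ 0 := ne_of_gt hα₃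
  set s1 := sin φ₁ with hs1d
  set c1 := cos φ₁ with hc1d
  set s2 := sin φ₂ with hs2d
  set c2 := cos φ₂ with hc2d
  have hsub_s : sin (φ₁ - φ₂) = s1 * c2 - c1 * s2 := sin_sub _ _
  have hsub_c : cos (φ₁ - φ₂) = c1 * c2 + s1 * s2 := cos_sub _ _
  rw [hsub_s] at hs1 hs2
  have hp1 : s1 ^ 2 + c1 ^ 2 = 1 := sin_sq_add_cos_sq φ₁
  have hp2 : s2 ^ 2 + c2 ^ 2 = 1 := sin_sq_add_cos_sq φ₂
  have hS : α₂ * s2 = α₁ * s1 := by rw [hs2, hs1]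
  have hE1 : α₂ * α₃ * c2 - α₁ * α₃ * c1 - α₁ * α₂ = 0 := by
    have h0 : s1 * (α₂ * α₃ * c2 - α₁ * α₃ * c1 - α₁ * α₂) = 0 := by
      linear_combination (-α₂) * hs1 + α₃ * c1 * hS
    rcases mul_eq_zero.mp h0 with h | h
    · exact absurd h hsin
    · exact h
  have hE2 : α₁ ^ 2 * (1 - c1 ^ 2) = α₂ ^ 2 * (1 - c2 ^ 2) := by
    linear_combination α₂ ^ 2 * hp2 - α₁ ^ 2 * hp1 - (α₂ * s2 + α₁ * s1) * hS
  have h1 : 2 * α₁ ^ 2 * α₂ * α₃ * c1 = α₂ ^ 2 * α₃ ^ 2 - α₁ ^ 2 * α₂ ^ 2 - α₁ ^ 2 * α₃ ^ 2 := by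
    linear_combination α₃ ^ 2 * hE2 - (α₂ * α₃ * c2 + α₁ * α₃ * c1 + α₁ * α₂) * hE1
  have h2 : 2 * α₁ * α₂ ^ 2 * α₃ * c2 = α₁ ^ 2 * α₂ ^ 2 + α₂ ^ 2 * α₃ ^ 2 - α₁ ^ 2 * α₃ ^ 2 := by
    linear_combination 2 * α₁ * α₂ * hE1 + h1
  have h3 : α₂ * α₃ * (s1 * s2) = α₁ * α₃ * (1 - c1 ^ 2) := by
    linear_combination α₃ * s1 * hS + α₁ * α₃ * hp1
  constructor
  · rw [hsub_c]
    have h4 : (4 * α₁ ^ 2 * α₂ ^ 2 * α₃ : ℝ) ≠ 0 := by positivity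
    have key2 : 4 * α₁ ^ 2 * α₂ ^ 2 * α₃ * (α₁ * c1 - α₂ * c2 - α₃ * (c1 * c2 + s1 * s2)) =
        -(2 * α₁ ^ 3 * α₂ * α₃ ^ 2 + 2 * α₁ * α₂ ^ 3 * α₃ ^ 2 + 2 * α₁ ^ 3 * α₂ ^ 3) := by
      linear_combination (2 * α₁ * α₃ * c1) * h1 - (2 * α₁ * α₂ + 2 * α₁ * α₃ * c1) * h2
        - (4 * α₁ ^ 2 * α₂ * α₃) * h3
    apply mul_left_cancel₀ h4
    rw [key2]
    field_simp
    ring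
  · intro ρ₁ ρ₂ ρ₃ hρ₁ hρ₁' hρ₂ hρ₂' hρ₃ hρ₃' hsum hA1 hA2 hA3
    have ha : (0:ℝ) < 1 - ρ₁ := by linarith
    have hb : (0:ℝ) < 1 - ρ₂ := by linarith
    have hc : (0:ℝ) < 1 - ρ₃ := by linarith
    have e1 : α₁ * α₃ / α₂ = 1 - ρ₃ := by
      rw [hA1, hA2, hA3, ← Real.sqrt_mul (by positivity) ]
      rw [show (1 - ρ₁) * (1 - ρ₃) * ((1 - ρ₂) * (1 - ρ₃)) = ((1-ρ₁)*(1-ρ₂)) * (1-ρ₃)^2 by ring]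
      rw [Real.sqrt_mul (by positivity), Real.sqrt_sq hc.le, mul_comm, mul_div_assoc,
        div_self (Real.sqrt_pos.mpr (mul_pos ha hb)).ne', mul_one]
    have e2 : α₂ * α₃ / α₁ = 1 - ρ₂ := by
      rw [hA1, hA2, hA3, ← Real.sqrt_mul (by positivity) ]
      rw [show (1 - ρ₁) * (1 - ρ₂) * ((1 - ρ₂) * (1 - ρ₃)) = ((1-ρ₁)*(1-ρ₃)) * (1-ρ₂)^2 by ring]
      rw [Real.sqrt_mul (by positivity), Real.sqrt_sq hb.le, mul_comm, mul_div_assoc,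
        div_self (Real.sqrt_pos.mpr (mul_pos ha hc)).ne', mul_one]
    have e3 : α₁ * α₂ / α₃ = 1 - ρ₁ := by
      rw [hA1, hA2, hA3, ← Real.sqrt_mul (by positivity) ]
      rw [show (1 - ρ₁) * (1 - ρ₃) * ((1 - ρ₁) * (1 - ρ₂)) = ((1-ρ₂)*(1-ρ₃)) * (1-ρ₁)^2 by ring]
      rw [Real.sqrt_mul (by positivity), Real.sqrt_sq ha.le, mul_comm, mul_div_assoc,
        div_self (Real.sqrt_pos.mpr (mul_pos hb hc)).ne', mul_one]
    have : α₁ * α₃ / (2 * α₂) + α₂ * α₃ / (2 * α₁) + α₁ * α₂ / (2 * α₃)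
        = (α₁ * α₃ / α₂ + α₂ * α₃ / α₁ + α₁ * α₂ / α₃) / 2 := by ring
    rw [this, e1, e2, e3]
    linarith
end
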